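/- For the Heisenberg group ℍ = ℝ³ with group law (a,b,c)·(u,v,s) = (a+u, b+v, c+s+(ub-va)/2), the function τ(a,b,c) = (a/2, b/2, c/2 + ab/6) satisfies the symmetry condition τ(x) = τ(x⁻¹)·x for all x ∈ ℍ. -/
import Mathlib


/-- Heisenberg group law on ℝ³: `(a,b,c)·(u,v,s) = (a+u, b+v, c+s+(ub-va)/2)`. -/
noncomputable def Hmul (x y : ℝ × ℝ × ℝ) : ℝ × ℝ × ℝ :=
  (x.1 + y.1, x.2.1 + y.2.1, x.2.2 + y.2.2 + (y.1 * x.2.1 - y.2.1 * x.1) / 2)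

/-- Inverse: `(a,b,c)⁻¹ = (-a,-b,-c)`. -/
def Hinv (x : ℝ × ℝ × ℝ) : ℝ × ℝ × ℝ := (-x.1, -x.2.1, -x.2.2)

/-- Symmetry function on the Heisenberg group. -/
noncomputable def Hτ (x : ℝ × ℝ × ℝ) : ℝ × ℝ × ℝ :=
  (x.1 / 2, x.2.1 / 2, x.2.2 / 2 + x.1 * x.2.1 / 6)

/-- `τ(a,b,c) = (a/2, b/2, c/2 + ab/6)` satisfies the symmetry condition
`τ(x) = τ(x⁻¹)·x` on the Heisenberg group. -/
theorem heisenberg_symmetry (x : ℝ × ℝ × ℝ) : Hτ x = Hmul (Hτ (Hinv x)) x := by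
  obtain ⟨a,b,c⟩ := x; simp [Hτ, Hmul, Hinv]; refine ⟨by ring, by ring, by ring⟩
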